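/- The set E of measurable functions u_0:Ω→[0,1] such that φ_1∘u_0 coincides a.e. on Ω_1 with a Lipschitz continuous function, φ_2∘u_0 coincides a.e. on Ω_2 with a Lipschitz continuous function, and the one-sided limits u_{0,1}=u_0(0⁻) and u_{0,2}=u_0(0⁺) at x=0 (well defined from these Lipschitz representatives since φ_i is increasing and continuous) satisfy π̃_1(u_{0,1})∩π̃_2(u_{0,2})≠∅, is dense with respect to the L¹(Ω)-norm in the set of all measurable functions u_0:Ω→[0,1]. -/

import Mathlib

open Set MeasureTheory
open Metric Filter

section Aux
set_option linter.unreachableTactic false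
set_option linter.unusedTactic false
lemma aux_avg (f : ℝ → ℝ) (hf : Integrable f) (hb : ∀ x, |f x| ≤ 1) {r : ℝ} (hr : 0 < r) :
    LipschitzWith (Real.toNNReal r⁻¹) (fun x => ⨍ y in closedBall x r, f y) ∧
      ∀ x, |⨍ y in closedBall x r, f y| ≤ 1 := by
  have hvol : ∀ x : ℝ, (volume (closedBall x r)).toReal = 2 * r := by
    intro x
    rw [Real.volume_closedBall, ENNReal.toReal_ofReal (by positivity)]
  have hFint : ∀ x : ℝ, ∫ y in closedBall x r, f y = ∫ t in (x - r)..(x + r), f t := by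
    intro x
    rw [Real.closedBall_eq_Icc, integral_Icc_eq_integral_Ioc,
      ← intervalIntegral.integral_of_le (by linarith)]
  have hFdiff : ∀ x y : ℝ,
      |(∫ t in closedBall x r, f t) - ∫ t in closedBall y r, f t| ≤ 2 * |x - y| := by
    intro x y
    rw [hFint, hFint]
    have II : ∀ a b : ℝ, IntervalIntegrable f volume a b := fun a b => hf.intervalIntegrable
    have h1 := intervalIntegral.integral_add_adjacent_intervals (μ := volume) (f := f)
      (II (y - r) (x - r)) (II (x - r) (x + r))
    have h2 := intervalIntegral.integral_add_adjacent_intervals (μ := volume) (f := f)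
      (II (y - r) (y + r)) (II (y + r) (x + r))
    have b1 : |∫ t in (y - r)..(x - r), f t| ≤ |x - y| := by
      have := intervalIntegral.norm_integral_le_of_norm_le_const (a := y - r) (b := x - r)
        (C := 1) (f := f) (fun t _ => by rw [Real.norm_eq_abs]; exact hb t)
      rw [Real.norm_eq_abs] at this
      calc |∫ t in (y - r)..(x - r), f t| ≤ 1 * |x - r - (y - r)| := this
        _ = |x - y| := by rw [one_mul]; ring_nf
    have b2 : |∫ t in (y + r)..(x + r), f t| ≤ |x - y| := by
      have := intervalIntegral.norm_integral_le_of_norm_le_const (a := y + r) (b := x + r)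
        (C := 1) (f := f) (fun t _ => by rw [Real.norm_eq_abs]; exact hb t)
      rw [Real.norm_eq_abs] at this
      calc |∫ t in (y + r)..(x + r), f t| ≤ 1 * |x + r - (y + r)| := this
        _ = |x - y| := by rw [one_mul]; ring_nf
    have key : (∫ t in (x - r)..(x + r), f t) - ∫ t in (y - r)..(y + r), f t
        = (∫ t in (y + r)..(x + r), f t) - ∫ t in (y - r)..(x - r), f t := by linarith
    rw [key]
    calc |(∫ t in (y + r)..(x + r), f t) - ∫ t in (y - r)..(x - r), f t|
        ≤ |∫ t in (y + r)..(x + r), f t| + |∫ t in (y - r)..(x - r), f t| := abs_sub _ _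
      _ ≤ 2 * |x - y| := by linarith
  constructor
  · apply LipschitzWith.of_dist_le_mul
    intro x y
    rw [Real.dist_eq, Real.dist_eq, setAverage_eq, setAverage_eq, measureReal_def, measureReal_def, hvol, hvol,
      smul_eq_mul, smul_eq_mul, ← mul_sub, abs_mul, abs_of_nonneg (by positivity : (0:ℝ) ≤ (2*r)⁻¹),
      Real.coe_toNNReal _ (by positivity)]
    calc (2 * r)⁻¹ * |(∫ t in closedBall x r, f t) - ∫ t in closedBall y r, f t|
        ≤ (2 * r)⁻¹ * (2 * |x - y|) := by
          apply mul_le_mul_of_nonneg_left (hFdiff x y) (by positivity)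
      _ = r⁻¹ * |x - y| := by field_simp
  · intro x
    rw [setAverage_eq, measureReal_def, hvol, smul_eq_mul, abs_mul,
      abs_of_nonneg (by positivity : (0:ℝ) ≤ (2*r)⁻¹)]
    have : |∫ t in closedBall x r, f t| ≤ 1 * (volume (closedBall x r)).toReal := by
      rw [← Real.norm_eq_abs]
      apply norm_setIntegral_le_of_norm_le_const
      · rw [Real.volume_closedBall]; exact ENNReal.ofReal_lt_top
      · intro t _; rw [Real.norm_eq_abs]; exact hb t
    rw [hvol, one_mul] at this
    calc (2 * r)⁻¹ * |∫ t in closedBall x r, f t| ≤ (2 * r)⁻¹ * (2 * r) := by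
          apply mul_le_mul_of_nonneg_left this (by positivity)
      _ = 1 := by field_simp


lemma aux_clamp (a b : ℝ) (ha : a ∈ Icc (0:ℝ) 1) : |a - max 0 (min 1 b)| ≤ |a - b| := by
  obtain ⟨h0, h1⟩ := ha
  rcases le_total b 0 with hb | hb
  · rw [min_eq_right (le_trans hb zero_le_one), max_eq_left hb, sub_zero, abs_of_nonneg h0,
      abs_of_nonneg (by linarith)]
    linarith
  rcases le_total 1 b with hb1 | hb1
  · rw [min_eq_left hb1, max_eq_right zero_le_one, abs_of_nonpos (by linarith),
      abs_of_nonpos (by linarith)]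
    linarith
  · rw [min_eq_right hb1, max_eq_right hb]

lemma aux_mul {f g : ℝ → ℝ} {Kf Kg : NNReal} (hf : LipschitzWith Kf f) (hg : LipschitzWith Kg g)
    (hbf : ∀ x, |f x| ≤ 1) (hbg : ∀ x, |g x| ≤ 1) :
    LipschitzWith (Kf + Kg) (fun x => f x * g x) := by
  apply LipschitzWith.of_dist_le_mul
  intro x y
  have h1 := hf.dist_le_mul x y
  have h2 := hg.dist_le_mul x y
  rw [Real.dist_eq] at h1 h2 ⊢
  rw [Real.dist_eq] at h1 h2 ⊢
  have key : f x * g x - f y * g y = f x * (g x - g y) + g y * (f x - f y) := by ring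
  have hd : (0:ℝ) ≤ |x - y| := abs_nonneg _
  push_cast
  calc |f x * g x - f y * g y| ≤ |f x| * |g x - g y| + |g y| * |f x - f y| := by
        rw [key]; exact (abs_add_le _ _).trans (by rw [abs_mul, abs_mul])
    _ ≤ 1 * ((Kg:ℝ) * |x - y|) + 1 * ((Kf:ℝ) * |x - y|) := by
        have := hbf x; have := hbg y
        have hKf : (0:ℝ) ≤ (Kf:ℝ) := Kf.2
        have hKg : (0:ℝ) ≤ (Kg:ℝ) := Kg.2
        gcongr <;> first | assumption | exact abs_nonneg _
    _ = ((Kf:ℝ) + (Kg:ℝ)) * |x - y| := by ring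

lemma aux_minlip (b c : ℝ) : |min 1 b - min 1 c| ≤ |b - c| := by
  rcases le_total b 1 with hb | hb <;> rcases le_total c 1 with hc | hc
  · rw [min_eq_right hb, min_eq_right hc]
  · rw [min_eq_right hb, min_eq_left hc, abs_sub_le_iff]
    constructor <;> linarith [le_abs_self (b - c), neg_abs_le (b - c), abs_nonneg (b - c)]
  · rw [min_eq_left hb, min_eq_right hc, abs_sub_le_iff]
    constructor <;> linarith [le_abs_self (b - c), neg_abs_le (b - c), abs_nonneg (b - c)]
  · rw [min_eq_left hb, min_eq_left hc, sub_self, abs_zero]; exact abs_nonneg _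



end Aux

set_option maxHeartbeats 1000000

/-- The monotone graph `π̃` associated to an increasing capillary pressure function `π`. -/
def tildePi (π : ℝ → ℝ) (s : ℝ) : Set ℝ :=
  if s = 0 then Set.Iic (π 0) else if s = 1 then Set.Ici (π 1) else {π s}

/-- The connection condition `π̃₁(a) ∩ π̃₂(b) ≠ ∅`. -/
def Connects (π₁ π₂ : ℝ → ℝ) (a b : ℝ) : Prop :=
  (tildePi π₁ a ∩ tildePi π₂ b).Nonempty

/-- The set `E` of initial data `u₀ : Ω → [0,1]` such that `φ_i ∘ u₀` is (a.e. equal to)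
a Lipschitz function on each `Ω_i` and whose one-sided traces at the interface satisfy the
capillary pressure connection condition, is dense in `{u₀ : Ω → [0,1] measurable}` for the
`L¹(Ω)`-norm. -/
theorem stmt17
    (π₁ π₂ φ₁ φ₂ : ℝ → ℝ)
    (hπ₁mono : StrictMonoOn π₁ (Icc 0 1)) (hπ₁lip : ∃ K, LipschitzOnWith K π₁ (Icc 0 1))
    (hπ₂mono : StrictMonoOn π₂ (Icc 0 1)) (hπ₂lip : ∃ K, LipschitzOnWith K π₂ (Icc 0 1))
    (hφ₁mono : StrictMonoOn φ₁ (Icc 0 1)) (hφ₁lip : ∃ K, LipschitzOnWith K φ₁ (Icc 0 1))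
    (hφ₁zero : φ₁ 0 = 0)
    (hφ₂mono : StrictMonoOn φ₂ (Icc 0 1)) (hφ₂lip : ∃ K, LipschitzOnWith K φ₂ (Icc 0 1))
    (hφ₂zero : φ₂ 0 = 0)
    (u₀ : ℝ → ℝ) (hu₀meas : Measurable u₀)
    (hu₀range : ∀ x ∈ Ioo (-1:ℝ) 1, u₀ x ∈ Icc (0:ℝ) 1)
    (ε : ℝ) (hε : 0 < ε) :
    ∃ (v : ℝ → ℝ) (g₁ g₂ : ℝ → ℝ) (v₁ v₂ : ℝ),
      Measurable v ∧
      (∀ x ∈ Ioo (-1:ℝ) 1, v x ∈ Icc (0:ℝ) 1) ∧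
      (∃ K, LipschitzWith K g₁) ∧ (∃ K, LipschitzWith K g₂) ∧
      (∀ᵐ x ∂(volume.restrict (Ioo (-1:ℝ) 0)), φ₁ (v x) = g₁ x) ∧
      (∀ᵐ x ∂(volume.restrict (Ioo (0:ℝ) 1)), φ₂ (v x) = g₂ x) ∧
      v₁ ∈ Icc (0:ℝ) 1 ∧ v₂ ∈ Icc (0:ℝ) 1 ∧
      φ₁ v₁ = g₁ 0 ∧ φ₂ v₂ = g₂ 0 ∧
      Connects π₁ π₂ v₁ v₂ ∧
      (∫ x in Ioo (-1:ℝ) 1, |u₀ x - v x|) < ε := by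
  
  -- the extended function
  set S : Set ℝ := Ioo (-1:ℝ) 1 with hS
  have hSmeas : MeasurableSet S := measurableSet_Ioo
  have hSvol : volume S < ⊤ := by
    rw [hS, Real.volume_Ioo]; exact ENNReal.ofReal_lt_top
  set u' : ℝ → ℝ := S.indicator u₀ with hu'
  have hu'meas : Measurable u' := hu₀meas.indicator hSmeas
  have hu'mem : ∀ x, u' x ∈ Icc (0:ℝ) 1 := by
    intro x
    by_cases hx : x ∈ S
    · rw [hu', indicator_of_mem hx]; exact hu₀range x hx
    · rw [hu', indicator_of_notMem hx]; exact ⟨le_refl 0, zero_le_one⟩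
  have hu'abs : ∀ x, |u' x| ≤ 1 := fun x =>
    abs_le.2 ⟨by linarith [(hu'mem x).1], (hu'mem x).2⟩
  have hint : Integrable u' := by
    rw [hu', integrable_indicator_iff hSmeas]
    have hc : IntegrableOn (fun _ => (1:ℝ)) S volume :=
      (integrableOn_const_iff (C := (1:ℝ)) (μ := volume) (s := S)).2 (Or.inr hSvol)
    refine Integrable.mono' hc hu₀meas.aestronglyMeasurable ?_
    rw [ae_restrict_iff' hSmeas]
    refine ae_of_all _ fun x hx => ?_
    rw [Real.norm_eq_abs]
    exact abs_le.2 ⟨by linarith [(hu₀range x hx).1], (hu₀range x hx).2⟩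
  -- integrability helper on S
  have hIntOn : ∀ (f : ℝ → ℝ), Measurable f → (∀ x, |f x| ≤ 2) → IntegrableOn f S := by
    intro f hm hb
    have hc : IntegrableOn (fun _ => (2:ℝ)) S volume :=
      (integrableOn_const_iff (C := (2:ℝ)) (μ := volume) (s := S)).2 (Or.inr hSvol)
    refine Integrable.mono' hc hm.aestronglyMeasurable (ae_of_all _ fun x => ?_)
    rw [Real.norm_eq_abs]; exact hb x
  -- Lebesgue differentiation along the sequence rₙ = 1/(n+1)
  set δseq : ℕ → ℝ := fun n => ((n:ℝ) + 1)⁻¹ with hδseq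
  have hδpos : ∀ n, 0 < δseq n := fun n => by positivity
  have hδlim : Tendsto δseq atTop (nhdsWithin 0 (Ioi 0)) := by
    apply tendsto_nhdsWithin_of_tendsto_nhds_of_eventually_within
    · have := tendsto_one_div_add_atTop_nhds_zero_nat (𝕜 := ℝ)
      simpa [hδseq, one_div] using this
    · exact Eventually.of_forall fun n => hδpos n
  set W : ℕ → ℝ → ℝ := fun n x => ⨍ y in closedBall x (δseq n), u' y with hW
  have haeT : ∀ᵐ x, Tendsto (fun n => W n x) atTop (nhds (u' x)) := by
    filter_upwards [IsUnifLocDoublingMeasure.ae_tendsto_average (μ := volume)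
      (hint.locallyIntegrable) 1] with x hx
    exact hx (fun _ => x) δseq hδlim
      (Eventually.of_forall fun j => mem_closedBall_self (by simpa using (hδpos j).le))
  have hWl : ∀ n, LipschitzWith (Real.toNNReal (δseq n)⁻¹) (W n) ∧ ∀ x, |W n x| ≤ 1 :=
    fun n => aux_avg u' hint hu'abs (hδpos n)
  -- dominated convergence
  have hDCT : Tendsto (fun n => ∫ x in S, |u' x - W n x|) atTop (nhds 0) := by
    have h0 : (0:ℝ) = ∫ _x in S, (0:ℝ) := by simp
    rw [h0]
    apply tendsto_integral_of_dominated_convergence (bound := fun _ => 2)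
    · intro n
      exact ((hu'meas.sub ((hWl n).1.continuous.measurable)).abs).aestronglyMeasurable
    · exact (integrableOn_const_iff (C := (2:ℝ)) (μ := volume) (s := S)).2 (Or.inr hSvol)
    · intro n
      refine ae_of_all _ fun x => ?_
      rw [Real.norm_eq_abs, abs_abs]
      calc |u' x - W n x| ≤ |u' x| + |W n x| := abs_sub _ _
        _ ≤ 2 := by linarith [hu'abs x, (hWl n).2 x]
    · refine ae_restrict_of_ae (haeT.mono fun x hx => ?_)
      have : Tendsto (fun n => |u' x - W n x|) atTop (nhds |u' x - u' x|) :=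
        (tendsto_const_nhds.sub hx).abs
      simpa using this
  obtain ⟨N, hN⟩ := (hDCT.eventually (gt_mem_nhds (by linarith : (0:ℝ) < ε/2))).exists
  -- the cutoff function
  set δ : ℝ := ε/8 with hδdef
  have hδ0 : 0 < δ := by positivity
  set ρ : ℝ → ℝ := fun x => min 1 (δ⁻¹ * |x|) with hρdef
  have hρ01 : ∀ x, ρ x ∈ Icc (0:ℝ) 1 := fun x =>
    ⟨le_min zero_le_one (by positivity), min_le_left _ _⟩
  have hρlip : LipschitzWith (Real.toNNReal δ⁻¹) ρ := by
    apply LipschitzWith.of_dist_le_mul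
    intro x y
    rw [Real.dist_eq, Real.dist_eq, Real.coe_toNNReal _ (by positivity)]
    calc |ρ x - ρ y| ≤ abs (δ⁻¹ * |x| - δ⁻¹ * |y|) := aux_minlip _ _
      _ = δ⁻¹ * abs (|x| - |y|) := by rw [← mul_sub, abs_mul, abs_of_nonneg (by positivity)]
      _ ≤ δ⁻¹ * |x - y| :=
        mul_le_mul_of_nonneg_left (abs_abs_sub_abs_le_abs_sub x y) (by positivity)
  have hρzero : ρ 0 = 0 := by simp [hρdef]
  have hρone : ∀ x : ℝ, δ ≤ |x| → ρ x = 1 := by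
    intro x hx
    apply min_eq_left
    calc (1:ℝ) = δ⁻¹ * δ := (inv_mul_cancel₀ hδ0.ne').symm
      _ ≤ δ⁻¹ * |x| := by gcongr
  -- the approximation
  set v0 : ℝ → ℝ := fun x => max 0 (min 1 (W N x)) with hv0def
  have hv0lip : LipschitzWith (1 * Real.toNNReal (δseq N)⁻¹) v0 :=
    ((LipschitzWith.id.const_min 1).const_max 0).comp (hWl N).1
  have hv001 : ∀ x, v0 x ∈ Icc (0:ℝ) 1 := fun x =>
    ⟨le_max_left _ _, max_le zero_le_one (min_le_left _ _)⟩
  set v : ℝ → ℝ := fun x => ρ x * v0 x with hvdef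
  have hvlip : LipschitzWith (Real.toNNReal δ⁻¹ + 1 * Real.toNNReal (δseq N)⁻¹) v := by
    apply aux_mul hρlip hv0lip
    · exact fun x => abs_le.2 ⟨by linarith [(hρ01 x).1], (hρ01 x).2⟩
    · exact fun x => abs_le.2 ⟨by linarith [(hv001 x).1], (hv001 x).2⟩
  have hv01 : ∀ x, v x ∈ Icc (0:ℝ) 1 := by
    intro x
    refine ⟨mul_nonneg (hρ01 x).1 (hv001 x).1, ?_⟩
    calc ρ x * v0 x ≤ 1 * 1 := by
          apply mul_le_mul (hρ01 x).2 (hv001 x).2 (hv001 x).1 zero_le_one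
      _ = 1 := one_mul 1
  have hvzero : v 0 = 0 := by simp [hvdef, hρzero]
  -- extend φ₁, φ₂
  obtain ⟨K₁, hK₁⟩ := hφ₁lip
  obtain ⟨ψ₁, hψ₁lip, hψ₁eq⟩ := hK₁.extend_real
  obtain ⟨K₂, hK₂⟩ := hφ₂lip
  obtain ⟨ψ₂, hψ₂lip, hψ₂eq⟩ := hK₂.extend_real
  have h0mem : (0:ℝ) ∈ Icc (0:ℝ) 1 := ⟨le_refl 0, zero_le_one⟩
  refine ⟨v, fun x => ψ₁ (v x), fun x => ψ₂ (v x), 0, 0, hvlip.continuous.measurable,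
    fun x _ => hv01 x, ⟨_, hψ₁lip.comp hvlip⟩, ⟨_, hψ₂lip.comp hvlip⟩,
    ae_of_all _ fun x => hψ₁eq (hv01 x), ae_of_all _ fun x => hψ₂eq (hv01 x),
    h0mem, h0mem, ?_, ?_, ?_, ?_⟩
  · show φ₁ 0 = ψ₁ (v 0)
    rw [hvzero]; exact hψ₁eq h0mem
  · show φ₂ 0 = ψ₂ (v 0)
    rw [hvzero]; exact hψ₂eq h0mem
  · exact ⟨min (π₁ 0) (π₂ 0), by simp [tildePi], by simp [tildePi]⟩
  -- the error estimate
  have hveq : EqOn (fun x => |u₀ x - v x|) (fun x => |u' x - v x|) S := by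
    intro x hx
    simp only [hu', indicator_of_mem hx]
  have habs_v : ∀ x, |v x| ≤ 1 := fun x => abs_le.2 ⟨by linarith [(hv01 x).1], (hv01 x).2⟩
  have hI1 : IntegrableOn (fun x => |u' x - v x|) S := by
    refine hIntOn _ ((hu'meas.sub hvlip.continuous.measurable).abs) fun x => ?_
    rw [abs_abs]
    calc |u' x - v x| ≤ |u' x| + |v x| := abs_sub _ _
      _ ≤ 2 := by linarith [hu'abs x, habs_v x]
  have hI2 : IntegrableOn (fun x => |u' x - W N x|) S := by
    refine hIntOn _ ((hu'meas.sub ((hWl N).1.continuous.measurable)).abs) fun x => ?_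
    rw [abs_abs]
    calc |u' x - W N x| ≤ |u' x| + |W N x| := abs_sub _ _
      _ ≤ 2 := by linarith [hu'abs x, (hWl N).2 x]
  have hI3 : IntegrableOn ((Icc (-δ) δ).indicator fun _ => (1:ℝ)) S := by
    refine hIntOn _ (measurable_const.indicator measurableSet_Icc) fun x => ?_
    by_cases hx : x ∈ Icc (-δ) δ
    · rw [indicator_of_mem hx]; norm_num
    · rw [indicator_of_notMem hx]; norm_num
  have hpt : ∀ x ∈ S, |u' x - v x|
      ≤ |u' x - W N x| + (Icc (-δ) δ).indicator (fun _ => (1:ℝ)) x := by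
    intro x _
    have h1 : |u' x - v0 x| ≤ |u' x - W N x| := aux_clamp _ _ (hu'mem x)
    have h2 : |v0 x - v x| ≤ (Icc (-δ) δ).indicator (fun _ => (1:ℝ)) x := by
      rcases le_or_gt δ |x| with hx | hx
      · have hvv : v x = v0 x := by
          show ρ x * v0 x = v0 x
          rw [hρone x hx, one_mul]
        rw [hvv, sub_self, abs_zero]
        exact indicator_nonneg (fun _ _ => zero_le_one) x
      · have hmem : x ∈ Icc (-δ) δ := by
          rw [mem_Icc]
          constructor
          · linarith [neg_abs_le x]
          · linarith [le_abs_self x]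
        rw [indicator_of_mem hmem]
        have hkey : v0 x - v x = v0 x * (1 - ρ x) := by show v0 x - ρ x * v0 x = _; ring
        rw [hkey, abs_of_nonneg (mul_nonneg (hv001 x).1 (by linarith [(hρ01 x).2]))]
        calc v0 x * (1 - ρ x) ≤ 1 * 1 := by
              apply mul_le_mul (hv001 x).2 (by linarith [(hρ01 x).1]) (by linarith [(hρ01 x).2])
                zero_le_one
          _ = 1 := one_mul 1
    calc |u' x - v x| ≤ |u' x - v0 x| + |v0 x - v x| := abs_sub_le _ _ _
      _ ≤ |u' x - W N x| + (Icc (-δ) δ).indicator (fun _ => (1:ℝ)) x := by linarith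
  have hind : ∫ x in S, (Icc (-δ) δ).indicator (fun _ => (1:ℝ)) x ≤ 2 * δ := by
    rw [setIntegral_indicator measurableSet_Icc, setIntegral_const, smul_eq_mul, mul_one]
    have hmono : volume (S ∩ Icc (-δ) δ) ≤ volume (Icc (-δ) δ) :=
      measure_mono inter_subset_right
    calc (volume (S ∩ Icc (-δ) δ)).toReal ≤ (volume (Icc (-δ) δ)).toReal := by
          apply ENNReal.toReal_mono _ hmono
          rw [Real.volume_Icc]
          exact ENNReal.ofReal_lt_top.ne
      _ = 2 * δ := by
          rw [Real.volume_Icc, ENNReal.toReal_ofReal (by linarith)]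
          ring
  calc ∫ x in S, |u₀ x - v x| = ∫ x in S, |u' x - v x| :=
        setIntegral_congr_fun hSmeas hveq
    _ ≤ ∫ x in S, (|u' x - W N x| + (Icc (-δ) δ).indicator (fun _ => (1:ℝ)) x) :=
        setIntegral_mono_on hI1 (hI2.add hI3) hSmeas hpt
    _ = (∫ x in S, |u' x - W N x|) + ∫ x in S, (Icc (-δ) δ).indicator (fun _ => (1:ℝ)) x :=
        integral_add hI2 hI3
    _ < ε/2 + 2 * δ := add_lt_add_of_lt_of_le hN hind
    _ ≤ ε := by rw [hδdef]; linarith
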